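/- With the sum-of-weighted-ratios setup, fix x = (x_1, …, x_n) such that every G_i(x) is positive definite. Then for every y = (y_1, …, y_n) ∈ (ℂ^ℓ)^n, f_q(x, y) ≤ f_o(x), and equality holds if and only if y_i = Y_i(x) := G_i(x)^{-1} A_i x_i for all i = 1, …, n. -/

import Mathlib

open Matrix ComplexOrder

/-- `Gᵢ(x) = ∑ⱼ Bᵢⱼ xⱼ xⱼᴴ Bᵢⱼᴴ`. -/
noncomputable def Gmat {n d ℓ : ℕ}
    (B : Fin n → Fin n → Matrix (Fin ℓ) (Fin d) ℂ)
    (x : Fin n → Fin d → ℂ) (i : Fin n) : Matrix (Fin ℓ) (Fin ℓ) ℂ :=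
  ∑ j, B i j * vecMulVec (x j) (star (x j)) * (B i j)ᴴ

/-- The ratio `Mᵢ(x) = (Aᵢ xᵢ)ᴴ Gᵢ(x)⁻¹ (Aᵢ xᵢ)` (a real number). -/
noncomputable def Mratio {n d ℓ : ℕ}
    (A : Fin n → Matrix (Fin ℓ) (Fin d) ℂ)
    (B : Fin n → Fin n → Matrix (Fin ℓ) (Fin d) ℂ)
    (x : Fin n → Fin d → ℂ) (i : Fin n) : ℝ :=
  (star (A i *ᵥ x i) ⬝ᵥ (Gmat B x i)⁻¹ *ᵥ (A i *ᵥ x i)).re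

/-- Sum-of-weighted-ratios objective `f_o(x) = ∑ᵢ ωᵢ Mᵢ(x)`. -/
noncomputable def fo {n d ℓ : ℕ} (ω : Fin n → ℝ)
    (A : Fin n → Matrix (Fin ℓ) (Fin d) ℂ)
    (B : Fin n → Fin n → Matrix (Fin ℓ) (Fin d) ℂ)
    (x : Fin n → Fin d → ℂ) : ℝ :=
  ∑ i, ω i * Mratio A B x i

/-- Quadratic-transform surrogate
`f_q(x, y) = ∑ᵢ ωᵢ [2 Re{xᵢᴴ Aᵢᴴ yᵢ} − ∑ⱼ yᵢᴴ Bᵢⱼ xⱼ xⱼᴴ Bᵢⱼᴴ yᵢ]`. -/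
noncomputable def fq {n d ℓ : ℕ} (ω : Fin n → ℝ)
    (A : Fin n → Matrix (Fin ℓ) (Fin d) ℂ)
    (B : Fin n → Fin n → Matrix (Fin ℓ) (Fin d) ℂ)
    (x : Fin n → Fin d → ℂ) (y : Fin n → Fin ℓ → ℂ) : ℝ :=
  ∑ i, ω i * (2 * (star (A i *ᵥ x i) ⬝ᵥ y i).re
    - ∑ j, (star (y i) ⬝ᵥ (B i j * vecMulVec (x j) (star (x j)) * (B i j)ᴴ) *ᵥ y i).re)


lemma key_expand {ℓ : ℕ} (G : Matrix (Fin ℓ) (Fin ℓ) ℂ) (hG : G.PosDef)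
    (a y : Fin ℓ → ℂ) :
    (star a ⬝ᵥ G⁻¹ *ᵥ a).re - (2 * (star a ⬝ᵥ y).re - (star y ⬝ᵥ G *ᵥ y).re)
      = (star (y - G⁻¹ *ᵥ a) ⬝ᵥ G *ᵥ (y - G⁻¹ *ᵥ a)).re := by
  have hdet : IsUnit G.det := hG.det_pos.ne'.isUnit
  set c := G⁻¹ *ᵥ a with hc
  have hGc : G *ᵥ c = a := by
    rw [hc, mulVec_mulVec, G.mul_nonsing_inv hdet, one_mulVec]
  have h1 : star c ⬝ᵥ G *ᵥ y = star a ⬝ᵥ y := by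
    rw [dotProduct_mulVec, ← hG.isHermitian.eq, ← star_mulVec, hGc]
  have h2 : star c ⬝ᵥ G *ᵥ c = star a ⬝ᵥ c := by
    rw [dotProduct_mulVec, ← hG.isHermitian.eq, ← star_mulVec, hGc]
  have h3 : (star y ⬝ᵥ G *ᵥ c).re = (star a ⬝ᵥ y).re := by
    rw [hGc, show star y ⬝ᵥ a = star (star a ⬝ᵥ y) by
      rw [star_dotProduct], Complex.star_def, Complex.conj_re]
  have hexp : star (y - c) ⬝ᵥ G *ᵥ (y - c)
      = star y ⬝ᵥ G *ᵥ y - star y ⬝ᵥ G *ᵥ c - star c ⬝ᵥ G *ᵥ y + star c ⬝ᵥ G *ᵥ c := by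
    rw [star_sub, sub_dotProduct, mulVec_sub, dotProduct_sub, dotProduct_sub]
    ring
  rw [hexp]
  simp only [Complex.sub_re, Complex.add_re, h1, h3, h2]
  ring

/-- For fixed `x` with every `Gᵢ(x)` positive definite, `f_q(x, y) ≤ f_o(x)`
for all `y`, with equality iff `yᵢ = Gᵢ(x)⁻¹ Aᵢ xᵢ` for all `i`. -/
theorem fq_le_fo_iff {n d ℓ : ℕ} (ω : Fin n → ℝ) (hω : ∀ i, 0 < ω i)
    (A : Fin n → Matrix (Fin ℓ) (Fin d) ℂ)
    (B : Fin n → Fin n → Matrix (Fin ℓ) (Fin d) ℂ)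
    (x : Fin n → Fin d → ℂ) (hG : ∀ i, (Gmat B x i).PosDef) :
    ∀ y : Fin n → Fin ℓ → ℂ,
      fq ω A B x y ≤ fo ω A B x ∧
      (fq ω A B x y = fo ω A B x ↔
        ∀ i, y i = (Gmat B x i)⁻¹ *ᵥ (A i *ᵥ x i)) := by
  intro y
  set c : Fin n → Fin ℓ → ℂ := fun i => (Gmat B x i)⁻¹ *ᵥ (A i *ᵥ x i) with hc
  have hinner : ∀ i, ∑ j, (star (y i) ⬝ᵥ
        (B i j * vecMulVec (x j) (star (x j)) * (B i j)ᴴ) *ᵥ y i).re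
      = (star (y i) ⬝ᵥ Gmat B x i *ᵥ y i).re := by
    intro i
    have hsm : ∀ (M : Fin n → Matrix (Fin ℓ) (Fin ℓ) ℂ) (v : Fin ℓ → ℂ),
        (∑ j, M j) *ᵥ v = ∑ j, M j *ᵥ v := by
      intro M v
      ext k
      simp only [mulVec, dotProduct, Matrix.sum_apply, Finset.sum_mul, Finset.sum_apply]
      rw [Finset.sum_comm]
    have hds : ∀ (w : Fin n → Fin ℓ → ℂ) (v : Fin ℓ → ℂ),
        v ⬝ᵥ (∑ j, w j) = ∑ j, v ⬝ᵥ w j := by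
      intro w v
      simp only [dotProduct, Finset.sum_apply, Finset.mul_sum]
      rw [Finset.sum_comm]
    rw [Gmat, hsm, hds, Complex.re_sum]
  have hdiff : fo ω A B x - fq ω A B x y
      = ∑ i, ω i * (star (y i - c i) ⬝ᵥ Gmat B x i *ᵥ (y i - c i)).re := by
    rw [fo, fq, ← Finset.sum_sub_distrib]
    refine Finset.sum_congr rfl fun i _ => ?_
    rw [hinner i, ← mul_sub, Mratio]
    congr 1
    exact key_expand (Gmat B x i) (hG i) (A i *ᵥ x i) (y i)
  have hnn : ∀ i ∈ Finset.univ,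
      (0:ℝ) ≤ ω i * (star (y i - c i) ⬝ᵥ Gmat B x i *ᵥ (y i - c i)).re :=
    fun i _ => mul_nonneg (hω i).le ((hG i).posSemidef.re_dotProduct_nonneg _)
  have hsum : 0 ≤ ∑ i, ω i * (star (y i - c i) ⬝ᵥ Gmat B x i *ᵥ (y i - c i)).re :=
    Finset.sum_nonneg hnn
  refine ⟨by linarith, ?_⟩
  rw [show (fq ω A B x y = fo ω A B x) ↔
      (∑ i, ω i * (star (y i - c i) ⬝ᵥ Gmat B x i *ᵥ (y i - c i)).re = 0) by
    constructor <;> intro h <;> linarith]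
  rw [Finset.sum_eq_zero_iff_of_nonneg hnn]
  constructor
  · intro h i
    by_contra hne
    have hz : y i - c i ≠ 0 := sub_ne_zero.mpr hne
    have hpos := mul_pos (hω i) ((hG i).re_dotProduct_pos hz)
    rw [RCLike.re_to_complex] at hpos
    linarith [h i (Finset.mem_univ i)]
  · intro h i _
    have hzz : y i - c i = 0 := sub_eq_zero.mpr (h i)
    rw [hzz]
    simp
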